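/- Let u and v be unit vectors in ℝ^n with ⟨u, v⟩ = −1 + ε for some ε ∈ (0, 1), and let d = u − ⟨u, v⟩·v. Let x ∈ ℝ^n and r > 0, and define A = x + r·d/‖d‖ and h = x + r·√(1 − ε/2)·(u + v)/‖u + v‖. Then ‖h − A‖ = r·√(ε/2). -/

import Mathlib

open scoped RealInnerProductSpace

set_option maxHeartbeats 1000000 in
/-- For unit vectors `u`, `v` with `⟪u, v⟫ = -1 + ε`, `ε ∈ (0,1)`,
`d = u - ⟪u, v⟫ • v`, a point `x` and radius `r > 0`, the triangle tip
`A = x + (r/‖d‖) • d` and the optimally-stepped heavy ball point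
`h = x + (r √(1 - ε/2)/‖u + v‖) • (u + v)` satisfy `‖h - A‖ = r √(ε/2)`. -/
theorem heavy_ball_distance_to_triangle_tip {n : ℕ}
    (u v : EuclideanSpace ℝ (Fin n))
    (hu : ‖u‖ = 1) (hv : ‖v‖ = 1)
    (ε : ℝ) (hε0 : 0 < ε) (hε1 : ε < 1)
    (hangle : ⟪u, v⟫ = -1 + ε)
    (d : EuclideanSpace ℝ (Fin n)) (hd : d = u - ⟪u, v⟫ • v)
    (x : EuclideanSpace ℝ (Fin n)) (r : ℝ) (hr : 0 < r)
    (A h : EuclideanSpace ℝ (Fin n))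
    (hA : A = x + (r / ‖d‖) • d)
    (hh : h = x + (r * Real.sqrt (1 - ε / 2) / ‖u + v‖) • (u + v)) :
    ‖h - A‖ = r * Real.sqrt (ε / 2) := by
  have huu : ⟪u, u⟫ = 1 := by
    rw [real_inner_self_eq_norm_sq, hu]; norm_num
  have hvv : ⟪v, v⟫ = 1 := by
    rw [real_inner_self_eq_norm_sq, hv]; norm_num
  have hvu : ⟪v, u⟫ = -1 + ε := by rw [real_inner_comm]; exact hangle
  -- norms squared
  have h008 : (0:ℝ) < 2 * ε := by linarith
  have h2e : ‖u + v‖ ^ 2 = 2 * ε := by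
    rw [← real_inner_self_eq_norm_sq]
    simp only [inner_add_left, inner_add_right, huu, hvv, hvu, hangle]
    ring
  have hde : ‖d‖ ^ 2 = ε * (2 - ε) := by
    rw [← real_inner_self_eq_norm_sq, hd, hangle]
    simp only [inner_sub_left, inner_sub_right, inner_smul_left, inner_smul_right,
      huu, hvv, hvu, hangle, RCLike.conj_to_real]
    ring
  have huv_norm : ‖u + v‖ = Real.sqrt (2 * ε) := by
    rw [← Real.sqrt_sq (norm_nonneg (u + v)), h2e]
  have hd_norm : ‖d‖ = Real.sqrt (ε * (2 - ε)) := by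
    rw [← Real.sqrt_sq (norm_nonneg d), hde]
  have huv_pos : (0:ℝ) < ‖u + v‖ := by
    rw [huv_norm]; exact Real.sqrt_pos.mpr h008
  have hd_pos : (0:ℝ) < ‖d‖ := by
    rw [hd_norm]; exact Real.sqrt_pos.mpr (by nlinarith)
  -- key inner product: ⟪u + v, d⟫ = ‖d‖²
  have hkey : ⟪u + v, d⟫ = ε * (2 - ε) := by
    rw [hd, hangle]
    simp only [inner_add_left, inner_sub_right, inner_smul_right, huu, hvv, hvu, hangle]
    ring
  set a : ℝ := r * Real.sqrt (1 - ε / 2) / ‖u + v‖ with ha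
  set b : ℝ := r / ‖d‖ with hb
  have hHA : h - A = a • (u + v) - b • d := by
    rw [hh, hA]; abel
  have hsq : ‖h - A‖ ^ 2 = (r * Real.sqrt (ε / 2)) ^ 2 := by
    have hKpos : (0:ℝ) < ε * (2 - ε) := by nlinarith
    set s1 : ℝ := Real.sqrt (1 - ε / 2) with hs1def
    set s2 : ℝ := Real.sqrt (2 * ε) with hs2def
    set s3 : ℝ := Real.sqrt (ε * (2 - ε)) with hs3def
    have q1 : s1 ^ 2 = 1 - ε / 2 := Real.sq_sqrt (by linarith)
    have q2 : s2 ^ 2 = 2 * ε := Real.sq_sqrt (le_of_lt h008)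
    have q3 : s3 ^ 2 = ε * (2 - ε) := Real.sq_sqrt (le_of_lt hKpos)
    have hsab : Real.sqrt (ε / 2) ^ 2 = ε / 2 := Real.sq_sqrt (by linarith)
    have n2 : s2 ≠ 0 := by rw [hs2def]; positivity
    have n3 : s3 ≠ 0 := by rw [hs3def]; positivity
    have hprod : s1 * s2 * s3 = ε * (2 - ε) := by
      rw [hs1def, hs2def, hs3def,
        ← Real.sqrt_mul (by linarith), ← Real.sqrt_mul (by nlinarith)]
      rw [show (1 - ε / 2) * (2 * ε) * (ε * (2 - ε)) = (ε * (2 - ε)) ^ 2 by ring]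
      exact Real.sqrt_sq (le_of_lt hKpos)
    have e1 : a * a * (2 * ε) = r ^ 2 * (1 - ε / 2) := by
      rw [ha, huv_norm]
      field_simp
      linear_combination (4 * ε) * q1 + (ε - 2) * q2
    have e2 : b * b * (ε * (2 - ε)) = r ^ 2 := by
      rw [hb, hd_norm]
      field_simp
      linear_combination - q3
    have e3 : a * b * (ε * (2 - ε)) = r ^ 2 * (1 - ε / 2) := by
      have n1 : s1 ≠ 0 := by
        rw [hs1def]
        exact ne_of_gt (Real.sqrt_pos.mpr (by linarith))
      rw [ha, hb, huv_norm, hd_norm, div_mul_div_comm, div_mul_eq_mul_div,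
        div_eq_iff (mul_ne_zero n2 n3)]
      apply mul_left_cancel₀ n1
      linear_combination (r ^ 2 * (ε * (2 - ε))) * q1 - (r ^ 2 * (1 - ε / 2)) * hprod
    clear_value a b s1 s2 s3
    rw [hHA, ← real_inner_self_eq_norm_sq]
    simp only [inner_sub_left, inner_sub_right, inner_smul_left, inner_smul_right,
      RCLike.conj_to_real]
    have hkey2 : ⟪d, u + v⟫ = ε * (2 - ε) := by rw [real_inner_comm]; exact hkey
    rw [real_inner_self_eq_norm_sq, real_inner_self_eq_norm_sq, hkey2, hkey, h2e, hde]
    linear_combination e1 + e2 - 2 * e3 - r ^ 2 * hsab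
  have h1 : (0:ℝ) ≤ r * Real.sqrt (ε / 2) := by positivity
  nlinarith [norm_nonneg (h - A), hsq]
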